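/- Let Q be a quiver obtained by gluing a set S of vertices of a quiver Q₀ into a single vertex (S spanning a strongly connected subquiver), with the induced graph homomorphism φ : Q₀ → Q. Then: (1) the image under φ of any directed cycle of Q₀ is a directed cycle of Q; (2) the image of a primitive cycle of Q₀ that meets S in at most one maximal segment is a primitive cycle of Q; and (3) every primitive cycle of Q has among its preimages at least one primitive cycle of Q₀, provided the subquiver spanned by S is strongly connected. -/

import Mathlib

/-- A quiver (finite directed multigraph): a finite set of vertices `V`,
a finite set of arrows `A`, and source/target maps `s`, `t`. -/
structure Quiv where
  V : Type
  A : Type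
  [fintV : Fintype V]
  [fintA : Fintype A]
  [decV : DecidableEq V]
  [decA : DecidableEq A]
  s : A → V
  t : A → V

attribute [instance] Quiv.fintV Quiv.fintA Quiv.decV Quiv.decA

namespace Quiv

variable (Q : Quiv)

/-- Cyclic access to the entries of a nonempty list. -/
def cyc (l : List Q.A) (hl : l ≠ []) (i : ℕ) : Q.A :=
  l.get ⟨i % l.length, Nat.mod_lt _ (List.length_pos_iff.mpr hl)⟩

/-- `l` is a (nonempty) directed cycle: consecutive arrows compose, cyclically. -/
def IsCycleList (l : List Q.A) : Prop :=
  ∃ hl : l ≠ [], ∀ i : ℕ, Q.t (Q.cyc l hl i) = Q.s (Q.cyc l hl (i + 1))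

/-- A primitive (simple) cycle: a directed cycle visiting no vertex more than once. -/
def IsPrimCycle (l : List Q.A) : Prop :=
  Q.IsCycleList l ∧ (l.map Q.s).Nodup

/-- The set of primitive cycles of `Q`, each recorded by its (finite) set of arrows.
A primitive cycle is determined, up to rotation, by its set of arrows. -/
def primCycles : Set (Finset Q.A) :=
  { S | ∃ l : List Q.A, Q.IsPrimCycle l ∧ l.toFinset = S }

/-- The number of primitive cycles of `Q`. -/
noncomputable def numPrimCycles : ℕ := Q.primCycles.ncard

/-- One-step reachability. -/
def Step (u v : Q.V) : Prop := ∃ a : Q.A, Q.s a = u ∧ Q.t a = v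

/-- `Q` is strongly connected: every vertex is reachable from every other
by a directed path. -/
def StronglyConnected : Prop := ∀ u v : Q.V, Relation.ReflTransGen Q.Step u v

/-- `Q` has no loops. -/
def NoLoops : Prop := ∀ a : Q.A, Q.s a ≠ Q.t a

/-- In-degree of a vertex (arrows counted with multiplicity). -/
def inDeg (v : Q.V) : ℕ := (Finset.univ.filter fun a => Q.t a = v).card

/-- Out-degree of a vertex (arrows counted with multiplicity). -/
def outDeg (v : Q.V) : ℕ := (Finset.univ.filter fun a => Q.s a = v).card

/-- `F(Q) = |C| + |V| - |A| - 1`, the codimension of the associated toric variety. -/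
noncomputable def F : ℤ :=
  (Q.numPrimCycles : ℤ) + (Fintype.card Q.V : ℤ) - (Fintype.card Q.A : ℤ) - 1


/-- The quiver obtained from `Q` by gluing the set `S` of vertices into a single
vertex `Sum.inr ()`; all arrows are kept (arrows inside `S` become loops). -/
def glue (Q : Quiv) (S : Finset Q.V) : Quiv where
  V := {v : Q.V // v ∉ S} ⊕ Unit
  A := Q.A
  fintV := inferInstance
  fintA := inferInstance
  decV := inferInstance
  decA := inferInstance
  s := fun a => if h : Q.s a ∈ S then Sum.inr () else Sum.inl ⟨Q.s a, h⟩
  t := fun a => if h : Q.t a ∈ S then Sum.inr () else Sum.inl ⟨Q.t a, h⟩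

/-- A cycle `l` of `Q` meets `S` in at most one maximal segment: for some rotation of
`l`, the visits to `S` occur consecutively. -/
def MeetsConsecutively (Q : Quiv) (S : Finset Q.V) (l : List Q.A) : Prop :=
  ∃ r : ℕ, ∀ i j k : Fin (l.rotate r).length, i ≤ j → j ≤ k →
    Q.s ((l.rotate r).get i) ∈ S → Q.s ((l.rotate r).get k) ∈ S →
    Q.s ((l.rotate r).get j) ∈ S

variable (Q : Quiv) {S : Finset Q.V}

lemma get_congr {α : Type*} (l : List α) {i i' : ℕ} (h : i < l.length) (h' : i' < l.length)
    (e : i = i') : l.get ⟨i, h⟩ = l.get ⟨i', h'⟩ := by subst e; rfl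

lemma cyc_eq (l : List Q.A) (hl : l ≠ []) (i : ℕ) :
    Q.cyc l hl i = l.get ⟨i % l.length, Nat.mod_lt _ (List.length_pos_iff.mpr hl)⟩ := rfl

lemma cyc_eq' (l : List Q.A) (hl : l ≠ []) (i : ℕ) (h : i < l.length) :
    Q.cyc l hl i = l.get ⟨i, h⟩ := by
  simp [cyc, Nat.mod_eq_of_lt h]

lemma getLast_eq_get' {α : Type*} (l : List α) (hl : l ≠ []) :
    l.getLast hl = l.get ⟨l.length - 1, by
      have := List.length_pos_iff.mpr hl; omega⟩ := by
  rw [List.getLast_eq_getElem]; rfl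

lemma head_eq_get' {α : Type*} (l : List α) (hl : l ≠ []) :
    l.head hl = l.get ⟨0, List.length_pos_iff.mpr hl⟩ := by
  rw [List.head_eq_getElem_zero]; rfl

/-- Chain' characterization of cycles. -/
lemma isCycleList_iff (l : List Q.A) :
    Q.IsCycleList l ↔ ∃ hl : l ≠ [],
      List.IsChain (fun a b => Q.t a = Q.s b) l ∧
      Q.t (l.getLast hl) = Q.s (l.head hl) := by
  constructor
  · rintro ⟨hl, h⟩
    have hpos : 0 < l.length := List.length_pos_iff.mpr hl
    refine ⟨hl, ?_, ?_⟩
    · rw [List.isChain_iff_getElem]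
      intro i hi
      have := h i
      rwa [Q.cyc_eq' l hl i (by omega), Q.cyc_eq' l hl (i+1) (by omega)] at this
    · have := h (l.length - 1)
      rw [Q.cyc_eq' l hl _ (by omega)] at this
      rw [Q.cyc_eq] at this
      rw [getLast_eq_get', head_eq_get']
      rw [this]
      congr 1
      apply get_congr
      have : l.length - 1 + 1 = l.length := by omega
      rw [this, Nat.mod_self]
  · rintro ⟨hl, hc, hw⟩
    have hpos : 0 < l.length := List.length_pos_iff.mpr hl
    refine ⟨hl, fun i => ?_⟩
    set j := i % l.length with hj
    have hjlt : j < l.length := Nat.mod_lt _ hpos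
    have hcyc1 : Q.cyc l hl i = l.get ⟨j, hjlt⟩ := rfl
    have hmod : (i + 1) % l.length = (j + 1) % l.length := by
      rw [hj]; rw [← Nat.mod_add_mod]
    rcases Nat.lt_or_ge (j+1) l.length with hlt | hge
    · have : Q.cyc l hl (i+1) = l.get ⟨j+1, hlt⟩ := by
        rw [Q.cyc_eq]
        apply get_congr
        simp [hmod, Nat.mod_eq_of_lt hlt]
      rw [hcyc1, this]
      exact List.isChain_iff_getElem.mp hc j (by omega)
    · have hj1 : j + 1 = l.length := by omega
      have : Q.cyc l hl (i+1) = l.get ⟨0, hpos⟩ := by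
        rw [Q.cyc_eq]
        apply get_congr
        simp [hmod, hj1]
      rw [hcyc1, this]
      rw [getLast_eq_get', head_eq_get'] at hw
      rw [get_congr l hjlt (by omega) (show j = l.length - 1 by omega)]
      exact hw

/-- The canonical map on vertices induced by gluing. -/
def gmap (Q : Quiv) (S : Finset Q.V) (v : Q.V) : (Q.glue S).V :=
  if h : v ∈ S then Sum.inr () else Sum.inl ⟨v, h⟩

lemma glue_s (S : Finset Q.V) (a : Q.A) : (Q.glue S).s a = gmap Q S (Q.s a) := rfl
lemma glue_t (S : Finset Q.V) (a : Q.A) : (Q.glue S).t a = gmap Q S (Q.t a) := rfl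

lemma gmap_cases {v w : Q.V} (h : gmap Q S v = gmap Q S w) :
    (v ∈ S ∧ w ∈ S) ∨ (v ∉ S ∧ w ∉ S ∧ v = w) := by
  by_cases hv : v ∈ S <;> by_cases hw : w ∈ S <;>
    unfold gmap at h
  · exact Or.inl ⟨hv, hw⟩
  · have h' : (Sum.inr () : {x : Q.V // x ∉ S} ⊕ Unit) = Sum.inl ⟨w, hw⟩ :=
      (dif_pos hv).symm.trans (h.trans (dif_neg hw))
    cases h'
  · have h' : (Sum.inl ⟨v, hv⟩ : {x : Q.V // x ∉ S} ⊕ Unit) = Sum.inr () :=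
      (dif_neg hv).symm.trans (h.trans (dif_pos hw))
    cases h'
  · refine Or.inr ⟨hv, hw, ?_⟩
    replace h : (Sum.inl ⟨v, hv⟩ : {x : Q.V // x ∉ S} ⊕ Unit) = Sum.inl ⟨w, hw⟩ :=
      (dif_neg hv).symm.trans (h.trans (dif_neg hw))
    exact congrArg Subtype.val (Sum.inl.inj h)

lemma gmap_eq_gmap {v w : Q.V} (hv : v ∈ S) (hw : w ∈ S) : gmap Q S v = gmap Q S w := by
  unfold gmap; exact (dif_pos hv).trans (dif_pos hw : (if h : w ∈ S then (Sum.inr () : {x : Q.V // x ∉ S} ⊕ Unit) else Sum.inl ⟨w, h⟩) = Sum.inr ()).symm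

lemma cyc_rotate (l : List Q.A) (r : ℕ) (hl : l ≠ []) (hl' : l.rotate r ≠ []) (i : ℕ) :
    Q.cyc (l.rotate r) hl' i = Q.cyc l hl (i + r) := by
  rw [Q.cyc_eq, Q.cyc_eq, List.get_rotate]
  apply get_congr
  simp [List.length_rotate, Nat.mod_add_mod]

lemma isCycleList_rotate {l : List Q.A} (r : ℕ) (h : Q.IsCycleList l) :
    Q.IsCycleList (l.rotate r) := by
  obtain ⟨hl, h⟩ := h
  have hl' : l.rotate r ≠ [] := by
    intro he
    apply hl
    have := List.length_rotate l r
    rw [he] at this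
    exact List.length_eq_zero_iff.mp this.symm
  refine ⟨hl', fun i => ?_⟩
  rw [Q.cyc_rotate l r hl hl', Q.cyc_rotate l r hl hl']
  have : i + 1 + r = (i + r) + 1 := by omega
  rw [this]
  exact h (i + r)

lemma isPrimCycle_rotate {l : List Q.A} (r : ℕ) (h : Q.IsPrimCycle l) :
    Q.IsPrimCycle (l.rotate r) := by
  refine ⟨Q.isCycleList_rotate r h.1, ?_⟩
  rw [List.map_rotate]
  exact ((List.rotate_perm _ _).nodup_iff).mpr h.2

/-- Part (1). -/
lemma glue_isCycleList (S : Finset Q.V) {l : List Q.A} (h : Q.IsCycleList l) :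
    (Q.glue S).IsCycleList l := by
  obtain ⟨hl, h⟩ := h
  exact ⟨hl, fun i => congrArg (gmap Q S) (h i)⟩

/-- Key lemma for part (2): a primitive cycle where the `S`-sources form a
proper prefix gives a primitive cycle of the glued quiver after filtering. -/
lemma key2 (S : Finset Q.V) (m : List Q.A) (hm : Q.IsPrimCycle m) (c : ℕ)
    (hc : c < m.length)
    (hiff : ∀ i (h : i < m.length), (Q.s (m.get ⟨i, h⟩) ∈ S ↔ i < c)) :
    (Q.glue S).IsPrimCycle (m.filter fun a => ¬(Q.s a ∈ S ∧ Q.t a ∈ S)) := by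
  obtain ⟨hcyc, hnd⟩ := hm
  obtain ⟨hl, hch, hw⟩ := (Q.isCycleList_iff m).mp hcyc
  have hpos : 0 < m.length := List.length_pos_iff.mpr hl
  have hcons : ∀ i (h : i + 1 < m.length),
      Q.t (m.get ⟨i, by omega⟩) = Q.s (m.get ⟨i + 1, h⟩) :=
    fun i h => List.isChain_iff_getElem.mp hch i h
  have hmap : m.map (Q.glue S).s = (m.map Q.s).map (gmap Q S) := by
    rw [List.map_map]; rfl
  rcases Nat.eq_zero_or_pos c with hc0 | hc1
  · -- no source lies in S; nothing is filtered out
    have hnS : ∀ a ∈ m, Q.s a ∉ S := by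
      intro a ha
      obtain ⟨i, hi, rfl⟩ := List.mem_iff_get.mp ha
      intro hin
      have := (hiff i.1 i.2).mp hin
      omega
    have hfil : (m.filter (fun a => ¬(Q.s a ∈ S ∧ Q.t a ∈ S)) : List (Q.glue S).A) = m := by
      refine (List.filter_eq_self (l := m)).mpr ?_
      intro a ha
      simp only [decide_eq_true_eq]
      exact fun h => hnS a ha h.1
    rw [hfil]
    refine ⟨Q.glue_isCycleList S hcyc, ?_⟩
    rw [hmap]
    refine List.Nodup.map_on ?_ hnd
    intro x hx y hy hxy
    rcases Q.gmap_cases hxy with ⟨h1, _⟩ | ⟨_, _, h⟩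
    · obtain ⟨a, ha, rfl⟩ := List.mem_map.mp hx
      exact absurd h1 (hnS a ha)
    · exact h
  · -- c ≥ 1: the filtered list is `m.drop (c-1)`
    set d := c - 1 with hd
    have hdc : d + 1 = c := by omega
    have hfil : (m.filter (fun a => ¬(Q.s a ∈ S ∧ Q.t a ∈ S)) : List (Q.glue S).A) = m.drop d := by
      show (m.filter (fun a => ¬(Q.s a ∈ S ∧ Q.t a ∈ S)) : List Q.A) = m.drop d
      conv_lhs => rw [← List.take_append_drop d m, List.filter_append]
      have h1 : ((m.take d).filter (fun a => ¬(Q.s a ∈ S ∧ Q.t a ∈ S)) : List Q.A) = [] := by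
        rw [List.filter_eq_nil_iff]
        intro a ha
        obtain ⟨i, hi, rfl⟩ := List.mem_iff_getElem.mp ha
        have hilen : i < d := by
          have := hi; rw [List.length_take] at this; omega
        rw [List.getElem_take]
        simp only [decide_eq_true_eq, not_not]
        have hilt : i < m.length := by omega
        have hi1 : i + 1 < m.length := by omega
        constructor
        · exact (hiff i hilt).mpr (by omega)
        · have := hcons i hi1
          show Q.t (m.get ⟨i, hilt⟩) ∈ S
          rw [this]
          exact (hiff (i+1) hi1).mpr (by omega)
      have h2 : ((m.drop d).filter (fun a => ¬(Q.s a ∈ S ∧ Q.t a ∈ S)) : List Q.A) = m.drop d := by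
        rw [List.filter_eq_self]
        intro a ha
        obtain ⟨i, hi, rfl⟩ := List.mem_iff_getElem.mp ha
        rw [List.getElem_drop]
        simp only [decide_eq_true_eq]
        rintro ⟨hs, ht⟩
        have hlen : d + i < m.length := by
          have := hi; rw [List.length_drop] at this; omega
        have hdi : d + i < c := (hiff _ hlen).mp hs
        have hieq : i = 0 := by omega
        subst hieq
        have hd1 : d + 0 + 1 < m.length := by omega
        have hts : Q.s (m.get ⟨d + 0 + 1, hd1⟩) ∈ S := by
          rw [← hcons (d+0) hd1]
          exact ht
        have := (hiff _ hd1).mp hts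
        omega
      rw [h1, h2, List.nil_append]
    rw [hfil]
    set m2 := m.drop d with hm2
    have hlen2 : m2.length = m.length - d := List.length_drop
    have hne2 : m2 ≠ [] := by
      intro h
      rw [h] at hlen2
      simp at hlen2
      omega
    have hget2 : ∀ i (h : i < m2.length), m2.get ⟨i, h⟩ = m.get ⟨d + i, by omega⟩ := by
      intro i h
      show (List.drop d m)[i] = m[d+i]'(by omega)
      simp
    constructor
    · refine ((Q.glue S).isCycleList_iff m2).mpr ?_
      refine ⟨hne2, ?_, ?_⟩
      · refine List.isChain_iff_getElem.mpr fun i hi' => ?_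
        have hi : i + 1 < m2.length := hi'
        change (Q.glue S).t (m2.get ⟨i, by omega⟩) = (Q.glue S).s (m2.get ⟨i + 1, hi⟩)
        have hdi : d + i + 1 < m.length := by omega
        rw [hget2 i (by omega), hget2 (i+1) (by omega)]
        show gmap Q S (Q.t _) = gmap Q S (Q.s _)
        rw [get_congr m (show d + (i+1) < m.length by omega) (show d + i + 1 < m.length by omega)
          (by omega)]
        exact congrArg (gmap Q S) (hcons (d+i) hdi)
      · change (Q.glue S).t (@List.getLast Q.A m2 hne2) = (Q.glue S).s (@List.head Q.A m2 hne2)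
        rw [getLast_eq_get', head_eq_get', hget2, hget2]
        show gmap Q S (Q.t _) = gmap Q S (Q.s _)
        have he : d + (m2.length - 1) = m.length - 1 := by omega
        have h0 : Q.t (m.get ⟨d + (m2.length - 1), by omega⟩) = Q.s (m.get ⟨0, hpos⟩) := by
          rw [get_congr m (by omega) (by omega) he]
          rw [getLast_eq_get', head_eq_get'] at hw
          exact hw
        rw [h0]
        exact Q.gmap_eq_gmap ((hiff 0 hpos).mpr (by omega)) ((hiff (d+0) (by omega)).mpr (by omega))
    · rw [List.nodup_iff_injective_get]
      intro i j hij
      simp only [List.get_eq_getElem, List.getElem_map] at hij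
      have hi' : (i : ℕ) < m2.length := lt_of_lt_of_eq i.2 (List.length_map _)
      have hj' : (j : ℕ) < m2.length := lt_of_lt_of_eq j.2 (List.length_map _)
      have hij' : gmap Q S (Q.s (m2.get ⟨i, hi'⟩)) = gmap Q S (Q.s (m2.get ⟨j, hj'⟩)) :=
        (List.getElem_map (Q.glue S).s).symm.trans (hij.trans (List.getElem_map (Q.glue S).s))
      rw [hget2 _ hi', hget2 _ hj'] at hij'
      have hndinj := List.nodup_iff_injective_get.mp hnd
      have key : (i : ℕ) = (j : ℕ) := by
        rcases Q.gmap_cases hij' with ⟨h1, h2⟩ | ⟨_, _, heq⟩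
        · have := (hiff _ (by omega)).mp h1
          have := (hiff _ (by omega)).mp h2
          omega
        · have hgl : (m.map Q.s).get ⟨d + i, by simp only [List.length_map]; omega⟩
              = (m.map Q.s).get ⟨d + j, by simp only [List.length_map]; omega⟩ := by
            simp only [List.get_eq_getElem, List.getElem_map]
            exact heq
          have h6 : d + (i : ℕ) = d + (j : ℕ) := congrArg Fin.val (hndinj hgl)
          omega
      exact Fin.ext key

lemma filter_rotate' {α : Type*} (l : List α) (p : α → Bool) (r : ℕ) :
    ∃ k, (l.rotate r).filter p = (l.filter p).rotate k := by
  set r' := r % l.length with hr'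
  refine ⟨((l.take r').filter p).length, ?_⟩
  rw [List.rotate_eq_drop_append_take_mod, List.filter_append]
  have hsplit : l.filter p = (l.take r').filter p ++ (l.drop r').filter p := by
    rw [← List.filter_append, List.take_append_drop]
  rw [hsplit, List.rotate_eq_drop_append_take (by simp), List.drop_left, List.take_left]

lemma exists_unrotate {α : Type*} (l : List α) (k : ℕ) :
    ∃ k', (l.rotate k).rotate k' = l :=
  (List.IsRotated.symm ⟨k, rfl⟩ : (l.rotate k) ~r l)

/-- Part (2). -/
lemma part2 (S : Finset Q.V) (l : List Q.A) (hprim : Q.IsPrimCycle l)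
    (hmeet : MeetsConsecutively Q S l) (hex : ∃ a ∈ l, Q.s a ∉ S) :
    (Q.glue S).IsPrimCycle (l.filter fun a => ¬(Q.s a ∈ S ∧ Q.t a ∈ S)) := by
  classical
  obtain ⟨r, hconv⟩ := hmeet
  have hl : l ≠ [] := hprim.1.choose
  have hpos : 0 < l.length := List.length_pos_iff.mpr hl
  have hn1 : (l.rotate r).length = l.length := List.length_rotate l r
  -- find a rotation of l with the `S`-prefix property
  have key : ∃ ρ c, c < (l.rotate ρ).length ∧
      ∀ i (h : i < (l.rotate ρ).length), (Q.s ((l.rotate ρ).get ⟨i, h⟩) ∈ S ↔ i < c) := by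
    by_cases hall : ∀ i (h : i < (l.rotate r).length), Q.s ((l.rotate r).get ⟨i, h⟩) ∉ S
    · refine ⟨r, 0, by omega, fun i h => ?_⟩
      simp only [Nat.not_lt_zero, iff_false]
      simpa using hall i h
    · push_neg at hall
      set n := (l.rotate r).length with hn
      set T : Finset ℕ :=
        (Finset.range n).filter
          (fun i => ∃ h : i < n, Q.s ((l.rotate r).get ⟨i, h⟩) ∈ S) with hT
      have hmemT : ∀ i, i ∈ T ↔ ∃ h : i < n, Q.s ((l.rotate r).get ⟨i, h⟩) ∈ S := by
        intro i
        rw [hT, Finset.mem_filter, Finset.mem_range]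
        exact ⟨fun h => h.2, fun h => ⟨h.choose, h⟩⟩
      have hTne : T.Nonempty := by
        obtain ⟨i, hi, his⟩ := hall
        exact ⟨i, (hmemT i).mpr ⟨hi, his⟩⟩
      set i0 := T.min' hTne with hi0
      set i1 := T.max' hTne with hi1
      obtain ⟨hi0n, hi0S⟩ := (hmemT i0).mp (T.min'_mem hTne)
      obtain ⟨hi1n, hi1S⟩ := (hmemT i1).mp (T.max'_mem hTne)
      have hi01 : i0 ≤ i1 := T.min'_le _ (T.max'_mem hTne)
      set c := i1 + 1 - i0 with hcdef
      have hcpos : 0 < c := by omega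
      have hcn : c < n := by
        by_contra hcc
        push_neg at hcc
        have hi0z : i0 = 0 := by omega
        have hi1n' : i1 = n - 1 := by omega
        obtain ⟨a, ha, has⟩ := hex
        have ha' : a ∈ l.rotate r := by rwa [List.mem_rotate]
        obtain ⟨ia, hia⟩ := List.mem_iff_get.mp ha'
        apply has
        rw [← hia]
        refine hconv ⟨i0, hi0n⟩ ia ⟨i1, hi1n⟩ ?_ ?_ hi0S hi1S
        · show i0 ≤ (ia : ℕ); omega
        · show (ia : ℕ) ≤ i1; have := ia.2; omega
      refine ⟨r + i0, c, ?_, ?_⟩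
      · rw [List.length_rotate]; omega
      · intro j hj
        have hj' : j < n := by rw [List.length_rotate] at hj; omega
        have hget2 : (l.rotate (r + i0)).get ⟨j, hj⟩
            = (l.rotate r).get ⟨(j + i0) % n, Nat.mod_lt _ (by omega)⟩ := by
          rw [List.get_rotate, List.get_rotate]
          apply get_congr
          show (j + (r + i0)) % l.length = ((j + i0) % n + r) % l.length
          rw [hn1, Nat.mod_add_mod]
          congr 1
          omega
        rw [hget2]
        constructor
        · intro hjS
          by_contra hjc
          push_neg at hjc
          have hmem : (j + i0) % n ∈ T :=
            (hmemT _).mpr ⟨Nat.mod_lt _ (by omega), hjS⟩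
          rcases Nat.lt_or_ge (j + i0) n with hlt | hge
          · have hmod : (j + i0) % n = j + i0 := Nat.mod_eq_of_lt hlt
            have hle := T.le_max' _ hmem
            omega
          · have hmod : (j + i0) % n = j + i0 - n := by
              rw [Nat.mod_eq_sub_mod hge, Nat.mod_eq_of_lt (by omega)]
            have hge2 := T.min'_le _ hmem
            omega
        · intro hjc
          have hlt : j + i0 ≤ i1 := by omega
          have hmod : (j + i0) % n = j + i0 := Nat.mod_eq_of_lt (by omega)
          refine hconv ⟨i0, hi0n⟩ ⟨(j + i0) % n, Nat.mod_lt _ (by omega)⟩ ⟨i1, hi1n⟩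
            ?_ ?_ hi0S hi1S
          · show i0 ≤ (j + i0) % n; omega
          · show (j + i0) % n ≤ i1; omega
  obtain ⟨ρ, c, hc, hiff⟩ := key
  have hprim2 : (Q.glue S).IsPrimCycle
      ((l.rotate ρ).filter fun a => ¬(Q.s a ∈ S ∧ Q.t a ∈ S)) :=
    Q.key2 S (l.rotate ρ) (Q.isPrimCycle_rotate ρ hprim) c hc hiff
  obtain ⟨k', hk'⟩ := exists_unrotate l ρ
  obtain ⟨k2, hk2⟩ := filter_rotate' (l.rotate ρ)
    (fun a => decide ¬(Q.s a ∈ S ∧ Q.t a ∈ S)) k'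
  rw [hk'] at hk2
  have hfin : (l.filter (fun a => ¬(Q.s a ∈ S ∧ Q.t a ∈ S)) : List (Q.glue S).A)
      = ((l.rotate ρ).filter fun a => ¬(Q.s a ∈ S ∧ Q.t a ∈ S)).rotate k2 := hk2
  rw [hfin]
  exact (Q.glue S).isPrimCycle_rotate k2 hprim2

/-- `p` is a walk from `u` to `w`. -/
def IsWalk (Q : Quiv) : List Q.A → Q.V → Q.V → Prop
  | [], u, w => u = w
  | a :: p, u, w => Q.s a = u ∧ IsWalk Q p (Q.t a) w

lemma isWalk_append {p q : List Q.A} {u v w : Q.V}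
    (hp : IsWalk Q p u v) (hq : IsWalk Q q v w) : IsWalk Q (p ++ q) u w := by
  induction p generalizing u with
  | nil => rw [show u = v from hp]; exact hq
  | cons a p ih => exact ⟨hp.1, ih hp.2⟩

lemma isWalk_head {p : List Q.A} {u w : Q.V} (hp : IsWalk Q p u w) (h : p ≠ []) :
    Q.s (p.head h) = u := by
  cases p with
  | nil => exact absurd rfl h
  | cons a p => exact hp.1

lemma isWalk_last {p : List Q.A} {u w : Q.V} (hp : IsWalk Q p u w) (h : p ≠ []) :
    Q.t (p.getLast h) = w := by
  induction p generalizing u with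
  | nil => exact absurd rfl h
  | cons a p ih =>
    cases p with
    | nil => exact hp.2
    | cons b p' =>
      rw [List.getLast_cons (by simp)]
      exact ih hp.2 (by simp)

lemma isWalk_chain' {p : List Q.A} {u w : Q.V} (hp : IsWalk Q p u w) :
    List.IsChain (fun a b => Q.t a = Q.s b) p := by
  induction p generalizing u with
  | nil => exact List.isChain_nil
  | cons a p ih =>
    rw [List.isChain_cons]
    refine ⟨?_, ih hp.2⟩
    intro b hb
    cases p with
    | nil => simp at hb
    | cons c p' =>
      simp at hb
      subst hb
      exact (Q.isWalk_head hp.2 (by simp)).symm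

lemma isWalk_take {p : List Q.A} {u w : Q.V} (hp : IsWalk Q p u w) :
    ∀ i (h : i < p.length), IsWalk Q (p.take i) u (Q.s (p.get ⟨i, h⟩)) := by
  induction p generalizing u with
  | nil => intro i h; simp at h
  | cons a p ih =>
    intro i h
    cases i with
    | zero => exact hp.1.symm
    | succ i =>
      refine ⟨hp.1, ?_⟩
      exact ih hp.2 i (by simpa using h)

lemma isWalk_drop {p : List Q.A} {u w : Q.V} (hp : IsWalk Q p u w) :
    ∀ i (h : i < p.length), IsWalk Q (p.drop i) (Q.s (p.get ⟨i, h⟩)) w := by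
  induction p generalizing u with
  | nil => intro i h; simp at h
  | cons a p ih =>
    intro i h
    cases i with
    | zero => rw [show Q.s ((a :: p).get ⟨0, h⟩) = u from hp.1]; exact hp
    | succ i => exact ih hp.2 i (by simpa using h)

lemma walk_of_rtg {S : Finset Q.V} {u w : Q.V}
    (h : Relation.ReflTransGen
      (fun x y : Q.V => ∃ a : Q.A, Q.s a = x ∧ Q.t a = y ∧ x ∈ S ∧ y ∈ S) u w) :
    ∃ p : List Q.A, IsWalk Q p u w ∧ ∀ a ∈ p, Q.s a ∈ S ∧ Q.t a ∈ S := by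
  induction h with
  | refl => exact ⟨[], rfl, by simp⟩
  | tail _ hstep ih =>
    obtain ⟨p, hp, hC⟩ := ih
    obtain ⟨a, hs, ht, hxS, hyS⟩ := hstep
    refine ⟨p ++ [a], Q.isWalk_append hp ⟨hs, ht⟩, ?_⟩
    intro b hb
    rcases List.mem_append.mp hb with hb | hb
    · exact hC b hb
    · simp at hb
      subst hb
      exact ⟨hs ▸ hxS, ht ▸ hyS⟩

lemma exists_simple_walk {C : Q.A → Prop} :
    ∀ (N : ℕ) (p : List Q.A) (u w : Q.V), p.length ≤ N → IsWalk Q p u w →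
      (∀ a ∈ p, C a) →
      ∃ q : List Q.A, IsWalk Q q u w ∧ (∀ a ∈ q, C a) ∧ (q.map Q.s).Nodup ∧
        w ∉ q.map Q.s := by
  intro N
  induction N with
  | zero =>
    intro p u w hlen hp hC
    have : p = [] := List.length_eq_zero_iff.mp (by omega)
    subst this
    exact ⟨[], hp, by simp, by simp, by simp⟩
  | succ N ih =>
    intro p u w hlen hp hC
    by_cases h1 : w ∈ p.map Q.s
    · obtain ⟨i, hi⟩ := List.mem_iff_get.mp h1
      have hi2 : (i : ℕ) < p.length := by simpa using i.2
      have hw : Q.s (p.get ⟨i, hi2⟩) = w := by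
        rw [← hi]; simp
      refine ih (p.take i) u w ?_ (hw ▸ Q.isWalk_take hp i hi2) ?_
      · rw [List.length_take]; omega
      · exact fun a ha => hC a (List.take_subset _ _ ha)
    · by_cases h2 : (p.map Q.s).Nodup
      · exact ⟨p, hp, hC, h2, h1⟩
      · have step : ∀ i j : Fin (p.map Q.s).length, (i : ℕ) < (j : ℕ) →
            (p.map Q.s).get i = (p.map Q.s).get j →
            ∃ q : List Q.A, IsWalk Q q u w ∧ (∀ a ∈ q, C a) ∧ (q.map Q.s).Nodup ∧
              w ∉ q.map Q.s := by
          intro i j hlt hij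
          have hi2 : (i : ℕ) < p.length := by simpa using i.2
          have hj2 : (j : ℕ) < p.length := by simpa using j.2
          have hss : Q.s (p.get ⟨i, hi2⟩) = Q.s (p.get ⟨j, hj2⟩) := by
            simpa using hij
          have hwalk : IsWalk Q (p.take i ++ p.drop j) u w :=
            Q.isWalk_append (hss ▸ Q.isWalk_take hp i hi2) (Q.isWalk_drop hp j hj2)
          refine ih (p.take i ++ p.drop j) u w ?_ hwalk ?_
          · rw [List.length_append, List.length_take, List.length_drop]
            omega
          · intro a ha
            rcases List.mem_append.mp ha with ha | ha
            · exact hC a (List.take_subset _ _ ha)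
            · exact hC a (List.drop_subset _ _ ha)
        rw [List.nodup_iff_injective_get] at h2
        rw [Function.not_injective_iff] at h2
        obtain ⟨i, j, hij, hne⟩ := h2
        rcases Nat.lt_or_ge (i : ℕ) (j : ℕ) with hlt | hge
        · exact step i j hlt hij
        · have hlt : (j : ℕ) < (i : ℕ) := by
            rcases Nat.lt_or_ge (j : ℕ) (i : ℕ) with h | h
            · exact h
            · exact absurd (Fin.ext (by omega)) hne
          exact step j i hlt hij.symm

lemma part3core (S : Finset Q.V)
    (hS : ∀ u ∈ S, ∀ w ∈ S, Relation.ReflTransGen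
      (fun x y : Q.V => ∃ a : Q.A, Q.s a = x ∧ Q.t a = y ∧ x ∈ S ∧ y ∈ S) u w)
    (m : List Q.A) (hm : (Q.glue S).IsPrimCycle m) (hne : m ≠ [])
    (h0 : Q.s (m.head hne) ∈ S)
    (hrest : ∀ i (h : i < m.length), 0 < i → Q.s (m.get ⟨i, h⟩) ∉ S) :
    ∃ l : List Q.A, Q.IsPrimCycle l ∧ (↑m : Multiset Q.A) ≤ ↑l ∧
      ∀ a ∈ l, a ∉ m → Q.s a ∈ S ∧ Q.t a ∈ S := by
  obtain ⟨hcyc, hnd⟩ := hm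
  obtain ⟨hne', hch, hwr⟩ := ((Q.glue S).isCycleList_iff m).mp hcyc
  have hpos : 0 < m.length := List.length_pos_iff.mpr hne
  have hgch : ∀ i (h : i + 1 < m.length),
      gmap Q S (Q.t (m.get ⟨i, by omega⟩)) = gmap Q S (Q.s (m.get ⟨i + 1, h⟩)) :=
    fun i h => List.isChain_iff_getElem.mp hch i h
  have hqch : ∀ i (h : i + 1 < m.length),
      Q.t (m.get ⟨i, by omega⟩) = Q.s (m.get ⟨i + 1, h⟩) := by
    intro i h
    rcases Q.gmap_cases (hgch i h) with ⟨_, h2⟩ | ⟨_, _, he⟩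
    · exact absurd h2 (hrest (i + 1) h (by omega))
    · exact he
  have hwr' : gmap Q S (Q.t (m.getLast hne)) = gmap Q S (Q.s (m.head hne)) := hwr
  have huS : Q.t (m.getLast hne) ∈ S := by
    rcases Q.gmap_cases hwr' with ⟨h1, _⟩ | ⟨_, h2, _⟩
    · exact h1
    · exact absurd h0 h2
  obtain ⟨p0, hp0, hp0C⟩ := Q.walk_of_rtg (hS _ huS _ h0)
  obtain ⟨q, hq, hqC, hqnd, hqw⟩ :=
    Q.exists_simple_walk p0.length p0 _ _ le_rfl hp0 hp0C
  have hmnd : (m.map Q.s).Nodup := by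
    have hmm : m.map (Q.glue S).s = (m.map Q.s).map (gmap Q S) := by
      rw [List.map_map]; rfl
    rw [hmm] at hnd
    exact hnd.of_map _
  refine ⟨m ++ q, ⟨?_, ?_⟩, ?_, ?_⟩
  · rw [Q.isCycleList_iff]
    have hmqne : m ++ q ≠ [] := by simp [hne]
    refine ⟨hmqne, ?_, ?_⟩
    · refine List.IsChain.append ?_ (Q.isWalk_chain' hq) ?_
      · exact List.isChain_iff_getElem.mpr fun i hi => hqch i (by omega)
      · intro x hx y hy
        have hqne : q ≠ [] := by
          intro h; subst h; simp at hy
        rw [List.getLast?_eq_getLast hne] at hx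
        rw [List.head?_eq_head hqne] at hy
        simp only [Option.mem_some_iff] at hx hy
        subst hx; subst hy
        exact (Q.isWalk_head hq hqne).symm
    · by_cases hq0 : q = []
      · subst hq0
        have huw : Q.t (m.getLast hne) = Q.s (m.head hne) := hq
        simp only [List.append_nil]
        exact huw
      · rw [List.getLast_append_right hq0, List.head_append_left hne]
        rw [Q.isWalk_last hq hq0]
  · rw [List.map_append, List.nodup_append]
    refine ⟨hmnd, hqnd, ?_⟩
    intro x hx y hx2 hxy; subst hxy
    obtain ⟨i, hig⟩ := List.mem_iff_get.mp hx
    have hi2 : (i : ℕ) < m.length := by simpa using i.2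
    have hxv : Q.s (m.get ⟨i, hi2⟩) = x := by
      rw [← hig]; simp
    rcases Nat.eq_zero_or_pos (i : ℕ) with hiz | hipos
    · -- x = w which is not a source of q
      apply hqw
      have : x = Q.s (m.head hne) := by
        rw [← hxv, head_eq_get']
        congr 1
        exact (get_congr m hi2 hpos hiz).symm ▸ rfl
      rwa [this] at hx2
    · -- x ∉ S but sources of q are in S
      obtain ⟨a, ha, rfl⟩ := List.mem_map.mp hx2
      exact absurd ((hqC a ha).1) (hxv ▸ hrest i hi2 hipos)
  · have hco : (↑(m ++ q) : Multiset Q.A) = ↑m + ↑q := rfl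
    rw [hco]
    exact Multiset.le_add_right _ _
  · intro a ha hnm
    rcases List.mem_append.mp ha with ha | ha
    · exact absurd ha hnm
    · exact hqC a ha

/-- Part (3). -/
lemma part3 (S : Finset Q.V)
    (hS : ∀ u ∈ S, ∀ w ∈ S, Relation.ReflTransGen
      (fun x y : Q.V => ∃ a : Q.A, Q.s a = x ∧ Q.t a = y ∧ x ∈ S ∧ y ∈ S) u w)
    (m : List Q.A) (hm : (Q.glue S).IsPrimCycle m) :
    ∃ l : List Q.A, Q.IsPrimCycle l ∧ (↑m : Multiset Q.A) ≤ ↑l ∧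
      ∀ a ∈ l, a ∉ m → Q.s a ∈ S ∧ Q.t a ∈ S := by
  have hne : m ≠ [] := hm.1.choose
  have hpos : 0 < m.length := List.length_pos_iff.mpr hne
  by_cases hcase : ∃ i : Fin m.length, Q.s (m.get i) ∈ S
  · obtain ⟨i0, hi0⟩ := hcase
    have hm' : (Q.glue S).IsPrimCycle (m.rotate i0) := (Q.glue S).isPrimCycle_rotate i0 hm
    have hlen' : (m.rotate (i0 : ℕ)).length = m.length := List.length_rotate m i0
    have hne' : m.rotate (i0 : ℕ) ≠ [] := by
      intro h; rw [h] at hlen'; simp at hlen'; omega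
    have hget' : ∀ j (h : j < (m.rotate (i0 : ℕ)).length),
        (m.rotate (i0 : ℕ)).get ⟨j, h⟩
          = m.get ⟨(j + (i0 : ℕ)) % m.length, Nat.mod_lt _ hpos⟩ := by
      intro j h
      rw [List.get_rotate]
    have h0' : Q.s ((m.rotate (i0 : ℕ)).head hne') ∈ S := by
      rw [head_eq_get', hget' 0 (by omega)]
      rw [get_congr m (Nat.mod_lt _ hpos) i0.2 (by simp [Nat.mod_eq_of_lt i0.2])]
      exact hi0
    have hrest' : ∀ j (h : j < (m.rotate (i0 : ℕ)).length), 0 < j →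
        Q.s ((m.rotate (i0 : ℕ)).get ⟨j, h⟩) ∉ S := by
      intro j h hj0 hjS
      rw [hget' j h] at hjS
      have hk : (j + (i0 : ℕ)) % m.length < m.length := Nat.mod_lt _ hpos
      have hgl : (m.map (Q.glue S).s).get ⟨(j + (i0 : ℕ)) % m.length, by
            exact lt_of_lt_of_eq hk (List.length_map _).symm⟩
          = (m.map (Q.glue S).s).get ⟨(i0 : ℕ), by
            exact lt_of_lt_of_eq i0.2 (List.length_map _).symm⟩ := by
        simp only [List.get_eq_getElem, List.getElem_map]
        refine (List.getElem_map (Q.glue S).s).trans (Eq.trans ?_ (List.getElem_map (Q.glue S).s).symm)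
        exact Q.gmap_eq_gmap hjS hi0
      have heq : (j + (i0 : ℕ)) % m.length = (i0 : ℕ) :=
        congrArg Fin.val (List.nodup_iff_injective_get.mp hm.2 hgl)
      have hjlen : j < m.length := by omega
      rcases Nat.lt_or_ge (j + (i0 : ℕ)) m.length with hlt | hge
      · rw [Nat.mod_eq_of_lt hlt] at heq; omega
      · rw [Nat.mod_eq_sub_mod hge, Nat.mod_eq_of_lt (by have := i0.2; omega)] at heq
        have := i0.2
        omega
    obtain ⟨l, hl, hml, hextra⟩ := Q.part3core S hS (m.rotate i0) hm' hne' h0' hrest'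
    have hmm : (↑(m.rotate (i0 : ℕ)) : Multiset Q.A) = ↑m :=
      Quot.sound (List.rotate_perm m i0)
    refine ⟨l, hl, by rwa [hmm] at hml, ?_⟩
    intro a ha hnm
    exact hextra a ha (fun hmem => hnm ((List.mem_rotate).mp hmem))
  · push_neg at hcase
    obtain ⟨hcyc, hnd⟩ := hm
    obtain ⟨hne2, hch, hwr⟩ := ((Q.glue S).isCycleList_iff m).mp hcyc
    have hgch : ∀ i (h : i + 1 < m.length),
        gmap Q S (Q.t (m.get ⟨i, by omega⟩)) = gmap Q S (Q.s (m.get ⟨i + 1, h⟩)) :=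
      fun i h => List.isChain_iff_getElem.mp hch i h
    have hmnd : (m.map Q.s).Nodup := by
      have hmm : m.map (Q.glue S).s = (m.map Q.s).map (gmap Q S) := by
        rw [List.map_map]; rfl
      rw [hmm] at hnd
      exact hnd.of_map _
    refine ⟨m, ⟨?_, hmnd⟩, le_refl _, fun a ha hnm => absurd ha hnm⟩
    rw [Q.isCycleList_iff]
    refine ⟨hne, ?_, ?_⟩
    · refine List.isChain_iff_getElem.mpr fun i hi => ?_
      rcases Q.gmap_cases (hgch i (by omega)) with ⟨_, h2⟩ | ⟨_, _, he⟩
      · exact absurd h2 (hcase ⟨i + 1, by omega⟩)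
      · exact he
    · have hwr' : gmap Q S (Q.t (m.getLast hne)) = gmap Q S (Q.s (m.head hne)) := hwr
      rcases Q.gmap_cases hwr' with ⟨_, h2⟩ | ⟨_, _, he⟩
      · exfalso
        rw [head_eq_get'] at h2
        exact hcase ⟨0, hpos⟩ h2
      · exact he
/-- for the quotient quiver `Q.glue S` obtained by gluing a vertex set
`S` into one vertex (arrows are unchanged):
(1) the image of any directed cycle of `Q` is a directed cycle of `Q.glue S`;
(2) the image of a primitive cycle meeting `S` in at most one maximal segment
    (and not entirely contained in `S`), i.e. the cycle with the arrows inside `S`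
    collapsed, is a primitive cycle of `Q.glue S`;
(3) if the subquiver spanned by `S` is strongly connected, then every primitive cycle
    of `Q.glue S` has a primitive cycle of `Q` among its preimages. -/
theorem stmt_10 (Q : Quiv) (S : Finset Q.V) :
    (∀ l : List Q.A, Q.IsCycleList l → (Q.glue S).IsCycleList l) ∧
    (∀ l : List Q.A, Q.IsPrimCycle l → MeetsConsecutively Q S l →
      (∃ a ∈ l, Q.s a ∉ S) →
      (Q.glue S).IsPrimCycle
        (l.filter fun a => ¬(Q.s a ∈ S ∧ Q.t a ∈ S))) ∧
    ((∀ u ∈ S, ∀ w ∈ S, Relation.ReflTransGen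
        (fun x y : Q.V => ∃ a : Q.A, Q.s a = x ∧ Q.t a = y ∧ x ∈ S ∧ y ∈ S) u w) →
      ∀ m : List Q.A, (Q.glue S).IsPrimCycle m →
        ∃ l : List Q.A, Q.IsPrimCycle l ∧ (↑m : Multiset Q.A) ≤ ↑l ∧
          ∀ a ∈ l, a ∉ m → Q.s a ∈ S ∧ Q.t a ∈ S) := by
  refine ⟨fun l h => Q.glue_isCycleList S h,
    fun l h1 h2 h3 => Q.part2 S l h1 h2 h3,
    fun hS m hm => Q.part3 S hS m hm⟩

end Quiv
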